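/- For any estimator Ŷ of W (a function of the observation X in a Markov chain W → X → Ŷ), the expected distortion satisfies E[ℓ(W,Ŷ)] ≥ sup_{ρ>0} ρ·(1 − (I(W;X) + log 2)/log(1/L(W,ρ))). -/

import Mathlib

open Finset Real

def IsPMF {α : Type*} [Fintype α] (p : α → ℝ) : Prop :=
  (∀ x, 0 ≤ p x) ∧ ∑ x, p x = 1

noncomputable def KL2 {α : Type*} [Fintype α] (p q : α → ℝ) : ℝ :=
  ∑ x, p x * Real.logb 2 (p x / q x)

noncomputable def MI2 {α β : Type*} [Fintype α] [Fintype β] (p : α × β → ℝ) : ℝ :=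
  ∑ x : α × β, p x * Real.logb 2 (p x / ((∑ b, p (x.1, b)) * (∑ a, p (a, x.2))))

noncomputable def H2 {α : Type*} [Fintype α] (p : α → ℝ) : ℝ :=
  -∑ x, p x * Real.logb 2 (p x)

noncomputable def push {α β : Type*} [Fintype α] (μ : α → ℝ) (K : α → β → ℝ) : β → ℝ :=
  fun y => ∑ x, μ x * K x y

noncomputable def binH (p : ℝ) : ℝ :=
  -(p * Real.logb 2 p) - (1 - p) * Real.logb 2 (1 - p)

noncomputable def etaAt {α β : Type*} [Fintype α] [Fintype β]
    (μ : α → ℝ) (K : α → β → ℝ) : ℝ :=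
  sSup { r | ∃ ν : α → ℝ, IsPMF ν ∧ (∀ x, μ x = 0 → ν x = 0) ∧ 0 < KL2 ν μ ∧
    r = KL2 (push ν K) (push μ K) / KL2 ν μ }

noncomputable def etaCh {α β : Type*} [Fintype α] [Fintype β] (K : α → β → ℝ) : ℝ :=
  sSup { r | ∃ μ ν : α → ℝ, IsPMF μ ∧ IsPMF ν ∧ (∀ x, μ x = 0 → ν x = 0) ∧
    0 < KL2 ν μ ∧ r = KL2 (push ν K) (push μ K) / KL2 ν μ }

noncomputable def capacity2 {U V : Type*} [Fintype U] [Fintype V] (Ch : U → V → ℝ) : ℝ :=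
  sSup { r | ∃ μ : U → ℝ, IsPMF μ ∧ r = MI2 (fun uv : U × V => μ uv.1 * Ch uv.1 uv.2) }

noncomputable def BSC (ε : ℝ) : Bool → Bool → ℝ := fun u v => if v = u then 1 - ε else ε


private lemma aux_pointwise {a b A B : ℝ} (ha : 0 ≤ a) (hb : 0 ≤ b)
    (hab : b = 0 → a = 0) (hA : 0 < A) (hB : 0 < B) :
    a - b * (A / B) ≤ a * Real.log (a / b) - a * Real.log (A / B) := by
  rcases eq_or_lt_of_le ha with h | h
  · have hb' : 0 ≤ b * (A / B) := by positivity
    simp only [← h, zero_mul, zero_sub, sub_zero]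
    linarith
  · have hb' : 0 < b := lt_of_le_of_ne hb (fun h0 => by simp [hab h0.symm] at h)
    have hx : 0 < b * A / (a * B) := by positivity
    have key := mul_le_mul_of_nonneg_left (Real.log_le_sub_one_of_pos hx) h.le
    have e1 : a * (b * A / (a * B) - 1) = b * (A / B) - a := by
      field_simp
    have e2 : a * Real.log (b * A / (a * B)) =
        a * Real.log b + a * Real.log A - a * Real.log a - a * Real.log B := by
      rw [Real.log_div (by positivity) (by positivity), Real.log_mul hb'.ne' hA.ne',
        Real.log_mul h.ne' hB.ne']
      ring
    have e3 : a * Real.log (a / b) = a * Real.log a - a * Real.log b := by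
      rw [Real.log_div h.ne' hb'.ne']; ring
    have e4 : a * Real.log (A / B) = a * Real.log A - a * Real.log B := by
      rw [Real.log_div hA.ne' hB.ne']; ring
    rw [e1, e2] at key
    linarith

private lemma log_sum_ineq {ι : Type*} (s : Finset ι) (a b : ι → ℝ)
    (ha : ∀ i ∈ s, 0 ≤ a i) (hb : ∀ i ∈ s, 0 ≤ b i)
    (hab : ∀ i ∈ s, b i = 0 → a i = 0) :
    (∑ i ∈ s, a i) * Real.log ((∑ i ∈ s, a i) / (∑ i ∈ s, b i)) ≤
      ∑ i ∈ s, a i * Real.log (a i / b i) := by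
  rcases eq_or_lt_of_le (Finset.sum_nonneg ha) with h | hApos
  · have h0 : ∀ i ∈ s, a i = 0 := (Finset.sum_eq_zero_iff_of_nonneg ha).mp h.symm
    rw [← h, zero_mul]
    refine le_of_eq (Finset.sum_eq_zero fun i hi => by rw [h0 i hi, zero_mul]).symm
  · have hBpos : 0 < ∑ i ∈ s, b i := by
      rcases eq_or_lt_of_le (Finset.sum_nonneg hb) with h0 | h0
      · exfalso
        have hb0 : ∀ i ∈ s, b i = 0 := (Finset.sum_eq_zero_iff_of_nonneg hb).mp h0.symm
        have : (∑ i ∈ s, a i) = 0 := Finset.sum_eq_zero fun i hi => hab i hi (hb0 i hi)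
        linarith
      · exact h0
    set A := ∑ i ∈ s, a i
    set B := ∑ i ∈ s, b i
    have key : ∀ i ∈ s,
        a i - b i * (A / B) ≤ a i * Real.log (a i / b i) - a i * Real.log (A / B) :=
      fun i hi => aux_pointwise (ha i hi) (hb i hi) (hab i hi) hApos hBpos
    have hsum := Finset.sum_le_sum key
    rw [Finset.sum_sub_distrib, Finset.sum_sub_distrib, ← Finset.sum_mul, ← Finset.sum_mul]
      at hsum
    have hBA : B * (A / B) = A := by field_simp
    linarith


private lemma logb_sum_ineq {ι : Type*} (s : Finset ι) (a b : ι → ℝ)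
    (ha : ∀ i ∈ s, 0 ≤ a i) (hb : ∀ i ∈ s, 0 ≤ b i)
    (hab : ∀ i ∈ s, b i = 0 → a i = 0) :
    (∑ i ∈ s, a i) * Real.logb 2 ((∑ i ∈ s, a i) / (∑ i ∈ s, b i)) ≤
      ∑ i ∈ s, a i * Real.logb 2 (a i / b i) := by
  have h := log_sum_ineq s a b ha hb hab
  have hlog2 : (0:ℝ) < Real.log 2 := Real.log_pos one_lt_two
  simp only [Real.logb, ← mul_div_assoc]
  rw [← Finset.sum_div]
  exact (div_le_div_iff_of_pos_right hlog2).mpr h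

/-- Bayes risk lower bound: E[ℓ(W,Ŷ)] ≥ sup_{ρ>0} ρ(1 − (I(W;X)+log 2)/log(1/L(W,ρ))),
stated as: for every ρ > 0 (with the small ball probability in (0,1)), the bound holds. -/
theorem bayes_risk_lower_bound
    {W X : Type*} [Fintype W] [Fintype X] [Nonempty W]
    (q : W × X → ℝ) (hq : IsPMF q)
    (ψ : X → W)
    (ℓ : W → W → ℝ) (hℓ : ∀ w w', 0 ≤ ℓ w w')
    (ρ : ℝ) (hρ : 0 < ρ)
    (L : ℝ)
    (hL : L = Finset.univ.sup' Finset.univ_nonempty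
      (fun w' : W => ∑ z : W × X, if ℓ z.1 w' ≤ ρ then q z else 0))
    (hL0 : 0 < L) (hL1 : L < 1) :
    (∑ z : W × X, q z * ℓ z.1 (ψ z.2)) ≥
      ρ * (1 - (MI2 q + 1) / Real.logb 2 (1 / L)) := by
    classical
  obtain ⟨hq0, hq1⟩ := hq
  set μ : W → ℝ := fun w => ∑ x, q (w, x) with hμdef
  set ν : X → ℝ := fun x => ∑ w, q (w, x) with hνdef
  set r : W × X → ℝ := fun z => μ z.1 * ν z.2 with hrdef
  have hμ0 : ∀ w, 0 ≤ μ w := fun w => Finset.sum_nonneg fun x _ => hq0 _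
  have hν0 : ∀ x, 0 ≤ ν x := fun x => Finset.sum_nonneg fun w _ => hq0 _
  have hr0 : ∀ z, 0 ≤ r z := fun z => mul_nonneg (hμ0 _) (hν0 _)
  have hrq : ∀ z : W × X, r z = 0 → q z = 0 := by
    intro z h
    have h1 : q z ≤ μ z.1 :=
      Finset.single_le_sum (f := fun x => q (z.1, x)) (fun x _ => hq0 _) (Finset.mem_univ z.2)
    have h2 : q z ≤ ν z.2 :=
      Finset.single_le_sum (f := fun w => q (w, z.2)) (fun w _ => hq0 _) (Finset.mem_univ z.1)
    rcases mul_eq_zero.mp h with h0 | h0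
    · have := hq0 z; rw [h0] at h1; linarith
    · have := hq0 z; rw [h0] at h2; linarith
  have hμsum : ∑ w, μ w = 1 := by rw [← hq1, Fintype.sum_prod_type]
  have hνsum : ∑ x, ν x = 1 := by
    rw [← hq1, Fintype.sum_prod_type]; exact Finset.sum_comm
  have hrsum : ∑ z : W × X, r z = 1 := by
    rw [Fintype.sum_prod_type]
    simp only [hrdef]
    calc ∑ w, ∑ x, μ w * ν x = ∑ w, μ w * ∑ x, ν x := by
          simp only [Finset.mul_sum]
      _ = 1 := by rw [hνsum]; simp [hμsum]
  have hMI : MI2 q = ∑ z : W × X, q z * Real.logb 2 (q z / r z) := rfl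
  set A : Finset (W × X) := Finset.univ.filter (fun z => ℓ z.1 (ψ z.2) ≤ ρ) with hAdef
  set Ac : Finset (W × X) := Finset.univ.filter (fun z => ¬ ℓ z.1 (ψ z.2) ≤ ρ) with hAcdef
  set p : ℝ := ∑ z ∈ A, q z with hpdef
  set t : ℝ := ∑ z ∈ A, r z with htdef
  have hsplit_q : p + ∑ z ∈ Ac, q z = 1 := by
    rw [hpdef, hAdef, hAcdef, Finset.sum_filter_add_sum_filter_not]; exact hq1
  have hsplit_r : t + ∑ z ∈ Ac, r z = 1 := by
    rw [htdef, hAdef, hAcdef, Finset.sum_filter_add_sum_filter_not]; exact hrsum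
  have hp0 : 0 ≤ p := Finset.sum_nonneg fun z _ => hq0 z
  have hp1 : p ≤ 1 := by
    have : 0 ≤ ∑ z ∈ Ac, q z := Finset.sum_nonneg fun z _ => hq0 z
    linarith
  have ht0 : 0 ≤ t := Finset.sum_nonneg fun z _ => hr0 z
  -- the sup' function
  set g : W → ℝ := fun w' => ∑ z : W × X, if ℓ z.1 w' ≤ ρ then q z else 0 with hgdef
  have hg : ∀ w', g w' = ∑ w, if ℓ w w' ≤ ρ then μ w else 0 := by
    intro w'
    rw [hgdef]
    simp only
    rw [Fintype.sum_prod_type]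
    refine Finset.sum_congr rfl fun w _ => ?_
    split_ifs with h
    · rfl
    · simp
  have hgL : ∀ w', g w' ≤ L := by
    intro w'
    rw [hL]
    exact Finset.le_sup' _ (Finset.mem_univ w')
  have htL : t ≤ L := by
    have ht' : t = ∑ x, ν x * g (ψ x) := by
      rw [htdef, hAdef, Finset.sum_filter, Fintype.sum_prod_type_right]
      refine Finset.sum_congr rfl fun x _ => ?_
      rw [hg (ψ x), Finset.mul_sum]
      refine Finset.sum_congr rfl fun w _ => ?_
      split_ifs with h
      · rw [hrdef]; ring
      · simp
    rw [ht']
    calc ∑ x, ν x * g (ψ x) ≤ ∑ x, ν x * L :=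
          Finset.sum_le_sum fun x _ => mul_le_mul_of_nonneg_left (hgL (ψ x)) (hν0 x)
      _ = L := by rw [← Finset.sum_mul, hνsum, one_mul]
  have ht1 : t < 1 := lt_of_le_of_lt htL hL1
  -- key information inequality
  have hlogL : 0 < Real.logb 2 (1 / L) :=
    Real.logb_pos one_lt_two (one_lt_one_div hL0 hL1)
  have hMI0 : 0 ≤ MI2 q := by
    have h := logb_sum_ineq Finset.univ q r (fun z _ => hq0 z) (fun z _ => hr0 z)
      (fun z _ => hrq z)
    rw [hq1, hrsum] at h
    rw [hMI]
    simpa using h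
  have key : p * Real.logb 2 (1 / L) ≤ MI2 q + 1 := by
    rcases eq_or_lt_of_le hp0 with hp | hp
    · rw [← hp, zero_mul]; linarith
    · -- p > 0
      have htpos : 0 < t := by
        rcases eq_or_lt_of_le ht0 with h0 | h0
        · exfalso
          have hr0' : ∀ z ∈ A, r z = 0 :=
            (Finset.sum_eq_zero_iff_of_nonneg fun z _ => hr0 z).mp h0.symm
          have : p = 0 := Finset.sum_eq_zero fun z hz => hrq z (hr0' z hz)
          linarith
        · exact h0
      have h1 : p * Real.logb 2 (p / t) ≤ ∑ z ∈ A, q z * Real.logb 2 (q z / r z) :=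
        logb_sum_ineq A q r (fun z _ => hq0 z) (fun z _ => hr0 z) (fun z _ => hrq z)
      have hq2 : ∑ z ∈ Ac, q z = 1 - p := by linarith
      have hr2 : ∑ z ∈ Ac, r z = 1 - t := by linarith
      have h2 : (1 - p) * Real.logb 2 ((1 - p) / (1 - t)) ≤
          ∑ z ∈ Ac, q z * Real.logb 2 (q z / r z) := by
        have := logb_sum_ineq Ac q r (fun z _ => hq0 z) (fun z _ => hr0 z) (fun z _ => hrq z)
        rwa [hq2, hr2] at this
      have hMIge : p * Real.logb 2 (p / t) + (1 - p) * Real.logb 2 ((1 - p) / (1 - t)) ≤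
          MI2 q := by
        rw [hMI, ← Finset.sum_filter_add_sum_filter_not Finset.univ
          (fun z : W × X => ℓ z.1 (ψ z.2) ≤ ρ)]
        exact add_le_add h1 h2
      -- bound first term
      have e1 : p * Real.logb 2 (p / t) = p * Real.logb 2 p - p * Real.logb 2 t := by
        rw [Real.logb_div hp.ne' htpos.ne']; ring
      have hlt : Real.logb 2 t ≤ Real.logb 2 L :=
        Real.logb_le_logb_of_le one_lt_two htpos htL
      have e1' : Real.logb 2 (1 / L) = - Real.logb 2 L := by
        rw [one_div, Real.logb_inv]
      have b1 : p * Real.logb 2 p + p * Real.logb 2 (1 / L) ≤ p * Real.logb 2 (p / t) := by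
        rw [e1, e1']
        have := mul_le_mul_of_nonneg_left hlt hp0
        linarith
      -- bound second term
      have b2 : (1 - p) * Real.logb 2 (1 - p) ≤ (1 - p) * Real.logb 2 ((1 - p) / (1 - t)) := by
        rcases eq_or_lt_of_le hp1 with h | h
        · rw [← h]; simp
        · have h1p : 0 < 1 - p := by linarith
          have h1t : 0 < 1 - t := by linarith
          have hdiv : 1 - p ≤ (1 - p) / (1 - t) := by
            rw [le_div_iff₀ h1t]
            nlinarith
          exact mul_le_mul_of_nonneg_left
            (Real.logb_le_logb_of_le one_lt_two h1p hdiv) h1p.le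
      -- binary entropy bound
      have hbin : -1 ≤ p * Real.logb 2 p + (1 - p) * Real.logb 2 (1 - p) := by
        have h := Real.binEntropy_le_log_two (p := p)
        rw [Real.binEntropy, Real.log_inv, Real.log_inv] at h
        have hlog2 : (0:ℝ) < Real.log 2 := Real.log_pos one_lt_two
        have : -(Real.log 2) ≤ p * Real.log p + (1 - p) * Real.log (1 - p) := by linarith
        simp only [Real.logb, ← mul_div_assoc]
        rw [← add_div, le_div_iff₀ hlog2]
        linarith
      linarith
  -- final assembly
  have hp_le : p ≤ (MI2 q + 1) / Real.logb 2 (1 / L) := (le_div_iff₀ hlogL).mpr key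
  have hE : ρ * (1 - p) ≤ ∑ z : W × X, q z * ℓ z.1 (ψ z.2) := by
    have hq2 : ∑ z ∈ Ac, q z = 1 - p := by linarith
    have step1 : ∑ z ∈ Ac, q z * ρ ≤ ∑ z ∈ Ac, q z * ℓ z.1 (ψ z.2) := by
      refine Finset.sum_le_sum fun z hz => ?_
      have hz' : ρ < ℓ z.1 (ψ z.2) := by
        have := Finset.mem_filter.mp hz
        exact lt_of_not_ge this.2
      exact mul_le_mul_of_nonneg_left hz'.le (hq0 z)
    have step2 : ∑ z ∈ Ac, q z * ℓ z.1 (ψ z.2) ≤ ∑ z : W × X, q z * ℓ z.1 (ψ z.2) :=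
      Finset.sum_le_sum_of_subset_of_nonneg (Finset.subset_univ _)
        (fun z _ _ => mul_nonneg (hq0 z) (hℓ _ _))
    have : ∑ z ∈ Ac, q z * ρ = ρ * (1 - p) := by
      rw [← Finset.sum_mul, hq2]; ring
    linarith
  have final : ρ * (1 - (MI2 q + 1) / Real.logb 2 (1 / L)) ≤ ρ * (1 - p) :=
    mul_le_mul_of_nonneg_left (by linarith) hρ.le
  exact le_trans final hE
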